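/- arXiv:1907.05838 — 2 statements merged into one kernel-verified Lean document; each statement's English description precedes it below -/
import Mathlib

section
/- Let $V$ be a finite-dimensional vector space over a field and $\gamma$ an endomorphism of $V$. The natural map $\ker(1 - \gamma) \to \operatorname{coker}(1 - \gamma)$ induced by the identity of $V$ is bijective if and only if $1$ is not a multiple root of the minimal polynomial of $\gamma$. -/
open Polynomial

/-- The natural map `ker(1-γ) → coker(1-γ)` is bijective iff `1` is not a
multiple root of the minimal polynomial of `γ`. -/
theorem stmt_6 (K : Type*) [Field K] (V : Type*) [AddCommGroup V] [Module K V]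
    [FiniteDimensional K V] (γ : Module.End K V) :
    Function.Bijective
      ((LinearMap.range ((1 : Module.End K V) - γ)).mkQ.comp
        (LinearMap.ker ((1 : Module.End K V) - γ)).subtype) ↔
      ¬ ((X - 1) ^ 2 ∣ minpoly K γ) := by
  classical
  set f : Module.End K V := 1 - γ with hf
  set m : K[X] := minpoly K γ with hm
  have hint : IsIntegral K γ := IsIntegral.of_finite K γ
  have hm0 : m ≠ 0 := minpoly.ne_zero hint
  have hmaeval : (aeval γ) m = 0 := minpoly.aeval K γ
  have haevalp : (aeval γ) (X - 1 : K[X]) = -f := by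
    simp [hf, map_sub]
  -- Step 1 : bijective ↔ injective
  have hdim : Module.finrank K (LinearMap.ker f) =
      Module.finrank K (V ⧸ LinearMap.range f) := by
    have h1 := LinearMap.finrank_range_add_finrank_ker f
    have h2 := Submodule.finrank_quotient_add_finrank (LinearMap.range f)
    omega
  have hbij : Function.Bijective
      ((LinearMap.range f).mkQ.comp (LinearMap.ker f).subtype) ↔
      Function.Injective ((LinearMap.range f).mkQ.comp (LinearMap.ker f).subtype) := by
    constructor
    · exact fun h => h.1
    · intro h
      exact ⟨h, (LinearMap.injective_iff_surjective_of_finrank_eq_finrank hdim).mp h⟩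
  rw [hbij]
  -- Step 2 : injective ↔ ker f² ≤ ker f
  have hinj : Function.Injective ((LinearMap.range f).mkQ.comp (LinearMap.ker f).subtype) ↔
      ∀ v : V, f (f v) = 0 → f v = 0 := by
    rw [← LinearMap.ker_eq_bot, LinearMap.ker_comp, Submodule.ker_mkQ]
    constructor
    · intro h v hv
      have hmem : (⟨f v, hv⟩ : LinearMap.ker f) ∈
          Submodule.comap (LinearMap.ker f).subtype (LinearMap.range f) := by
        simpa using ⟨v, rfl⟩
      have := h ▸ hmem
      exact congrArg Subtype.val ((Submodule.mem_bot K).mp this)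
    · intro h
      rw [Submodule.eq_bot_iff]
      rintro ⟨x, hx⟩ hmemb
      obtain ⟨w, hw⟩ := hmemb
      have hfw : f (f w) = 0 := by rw [hw]; exact hx
      have hx0 : (LinearMap.ker f).subtype ⟨x, hx⟩ = 0 := by
        rw [← hw, h w hfw]
      exact Subtype.ext (by simpa using hx0)
  rw [hinj]
  constructor
  · -- ker f² ≤ ker f → ¬ (X-1)^2 ∣ m
    intro hP hdvd
    obtain ⟨q, hq⟩ := hdvd
    have hq0 : q ≠ 0 := by
      intro h; rw [h, mul_zero] at hq; exact hm0 hq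
    have hx1 : (X - 1 : K[X]) ≠ 0 := by
      have := Polynomial.X_sub_C_ne_zero (1 : K)
      simpa using this
    have hr : (aeval γ) ((X - 1) * q) = 0 := by
      ext v
      have hfq : f (f ((aeval γ) q v)) = 0 := by
        have : (aeval γ) ((X - 1) ^ 2 * q) v = 0 := by rw [← hq, hmaeval]; simp
        simpa [map_mul, map_pow, haevalp, Module.End.mul_apply, pow_two] using this
      have := hP _ hfq
      have : (-f) ((aeval γ) q v) = 0 := by simp [this]
      simpa [map_mul, haevalp, Module.End.mul_apply] using this
    have hdvd' : m ∣ (X - 1) * q := minpoly.dvd K γ hr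
    have hle := Polynomial.natDegree_le_of_dvd (hq ▸ hdvd') (mul_ne_zero hx1 hq0)
    rw [Polynomial.natDegree_mul (pow_ne_zero 2 hx1) hq0,
      Polynomial.natDegree_mul hx1 hq0, Polynomial.natDegree_pow] at hle
    have : (X - 1 : K[X]).natDegree = 1 := by
      have := Polynomial.natDegree_X_sub_C (1 : K)
      simpa using this
    omega
  · -- ¬ (X-1)^2 ∣ m → ker f² ≤ ker f
    intro hndvd v hv
    set p : K[X] := X - 1 with hp
    have hprime : Prime p := by
      have := Polynomial.irreducible_X_sub_C (1 : K)
      simp only [map_one] at this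
      exact this.prime
    set d : K[X] := EuclideanDomain.gcd (p ^ 2) m with hd
    have hdm : d ∣ m := EuclideanDomain.gcd_dvd_right _ _
    have hdp : d ∣ p := by
      obtain ⟨i, hi, hassoc⟩ := (dvd_prime_pow hprime 2).mp (EuclideanDomain.gcd_dvd_left (p ^ 2) m)
      interval_cases i
      · exact ((associated_one_iff_isUnit.mp (by simpa using hassoc)).dvd)
      · exact (by simpa using hassoc.dvd)
      · exact absurd (dvd_trans hassoc.symm.dvd hdm) hndvd
    obtain ⟨c, hc⟩ := hdp
    have hbez := EuclideanDomain.gcd_eq_gcd_ab (p ^ 2) m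
    have hc' : p = (p ^ 2 * EuclideanDomain.gcdA (p ^ 2) m
        + m * EuclideanDomain.gcdB (p ^ 2) m) * c := by
      rw [hd, hbez] at hc; exact hc
    have heq2 : p = EuclideanDomain.gcdA (p ^ 2) m * c * p ^ 2
        + EuclideanDomain.gcdB (p ^ 2) m * c * m := by linear_combination hc'
    have h3 := congrArg (fun r : K[X] => (aeval γ) r v) heq2
    simp only [map_add, map_mul, map_pow, haevalp, hmaeval, LinearMap.add_apply,
      Module.End.mul_apply, LinearMap.zero_apply, map_zero, LinearMap.neg_apply, map_neg,
      neg_neg, pow_two, hv, add_zero] at h3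
    simpa using h3
end

section
/- Let $M$ be a finitely generated $\mathbb{Z}_p$-module with endomorphism $\gamma$, and let $f : \ker(1-\gamma) \to M/\operatorname{im}(1-\gamma)$ be the map induced by the identity. Then $f$ has finite kernel and finite cokernel if and only if $1$ is not a multiple root of the minimal polynomial of $\gamma$ acting on $M \otimes \mathbb{Q}_p$. -/
open Polynomial

private lemma kills_all {p : ℕ} [Fact p.Prime] {N : Type*} [AddCommGroup N] [Module ℤ_[p] N]
    (c : ℤ_[p]) (s : Finset N) (hs : Submodule.span ℤ_[p] (s : Set N) = ⊤)
    (hgen : ∀ x ∈ s, c • x = 0) (y : N) : c • y = 0 := by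
  have hy : y ∈ Submodule.span ℤ_[p] (s : Set N) := hs ▸ Submodule.mem_top
  induction hy using Submodule.span_induction with
  | mem x hx => exact hgen x hx
  | zero => simp
  | add x y _ _ hx hy => rw [smul_add, hx, hy, add_zero]
  | smul r x _ hx => rw [smul_comm, hx, smul_zero]

private lemma finite_iff_torsion {p : ℕ} [Fact p.Prime] {N : Type*} [AddCommGroup N]
    [Module ℤ_[p] N] [Module.Finite ℤ_[p] N] :
    Finite N ↔ Module.IsTorsion ℤ_[p] N := by
  classical
  constructor
  · intro _ y
    have h1 : addOrderOf y • y = 0 := addOrderOf_nsmul_eq_zero y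
    have h2 : addOrderOf y ≠ 0 := (addOrderOf_pos y).ne'
    refine ⟨⟨(addOrderOf y : ℤ_[p]), mem_nonZeroDivisors_of_ne_zero (by exact_mod_cast h2)⟩, ?_⟩
    rw [Submonoid.smul_def, Nat.cast_smul_eq_nsmul]
    exact h1
  · intro htor
    obtain ⟨s, hs⟩ := (Module.Finite.fg_top (R := ℤ_[p]) (M := N))
    choose cf hcf using fun x : N => htor (x := x)
    obtain ⟨c, hcmem, hcgen⟩ : ∃ c ∈ nonZeroDivisors ℤ_[p], ∀ x ∈ s, c • x = 0 := by
      refine ⟨∏ x ∈ s, (cf x : ℤ_[p]), prod_mem (fun x _ => (cf x).2), fun x hx => ?_⟩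
      rw [← Finset.prod_erase_mul _ _ hx, mul_smul]
      have := hcf x
      rw [Submonoid.smul_def] at this
      rw [this, smul_zero]
    have hcne : c ≠ 0 := nonZeroDivisors.ne_zero hcmem
    obtain ⟨k, u, hu⟩ : ∃ (k : ℕ) (u : ℤ_[p]ˣ), c = (u : ℤ_[p]) * (p : ℤ_[p]) ^ k :=
      ⟨_, _, PadicInt.unitCoeff_spec hcne⟩
    have hpk : ∀ y : N, ((p : ℤ_[p]) ^ k) • y = 0 := by
      intro y
      have h1 : ((↑u⁻¹ : ℤ_[p])) • (c • y) = ((p : ℤ_[p]) ^ k) • y := by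
        rw [← mul_smul, hu, ← mul_assoc, Units.inv_mul, one_mul]
      rw [← h1, kills_all c s hs hcgen y, smul_zero]
    have hZfg : Module.Finite ℤ N := by
      constructor
      refine ⟨s, le_antisymm le_top ?_⟩
      intro y hyt
      clear hyt
      have hy : y ∈ Submodule.span ℤ_[p] (s : Set N) := hs ▸ Submodule.mem_top
      induction hy using Submodule.span_induction with
      | mem x hx => exact Submodule.subset_span hx
      | zero => exact zero_mem _
      | add a b _ _ ha hb => exact add_mem ha hb
      | smul r x _ hx =>
        obtain ⟨z, hz⟩ : ∃ z : ℤ, r - (z : ℤ_[p]) ∈ Ideal.span {(p : ℤ_[p]) ^ k} := by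
          refine ⟨((PadicInt.toZModPow k r).val : ℤ), ?_⟩
          rw [← PadicInt.ker_toZModPow, RingHom.mem_ker, map_sub, sub_eq_zero,
            map_intCast, Int.cast_natCast, ZMod.natCast_val, ZMod.cast_id]
        rw [Ideal.mem_span_singleton] at hz
        obtain ⟨a, ha⟩ := hz
        have h1 : r • x - (z : ℤ_[p]) • x = 0 := by
          rw [← sub_smul, ha, mul_smul, hpk]
        have h2 : r • x = (z : ℤ_[p]) • x := by rwa [sub_eq_zero] at h1
        rw [h2, Int.cast_smul_eq_zsmul]
        exact Submodule.smul_mem _ z hx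
    have hZtor : Module.IsTorsion ℤ N := by
      intro y
      have hne : ((p : ℤ) ^ k) ≠ 0 :=
        pow_ne_zero k (Int.natCast_ne_zero.mpr (Fact.out (p := p.Prime)).ne_zero)
      refine ⟨⟨(p : ℤ) ^ k, mem_nonZeroDivisors_of_ne_zero hne⟩, ?_⟩
      rw [Submonoid.smul_def, ← Int.cast_smul_eq_zsmul ℤ_[p]]
      push_cast
      exact hpk y
    exact Module.finite_of_fg_torsion N hZtor
open Polynomial

private lemma aeval_fixed {k V : Type*} [Field k] [AddCommGroup V] [Module k V]
    (g : Module.End k V) {x : V} (hx : g x = x) (q : k[X]) :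
    (aeval g) q x = q.eval 1 • x := by
  induction q using Polynomial.induction_on' with
  | add r s hr hs => simp [hr, hs, add_smul]
  | monomial n a =>
    have hpow : ∀ m : ℕ, (g ^ m) x = x := by
      intro m
      induction m with
      | zero => simp
      | succ m ih => rw [pow_succ, Module.End.mul_apply, hx, ih]
    simp [aeval_monomial, eval_monomial, Module.End.mul_apply, hpow,
      Module.algebraMap_end_apply]

private lemma aeval_X_sub_one {k V : Type*} [Field k] [AddCommGroup V] [Module k V]
    (g : Module.End k V) : (aeval g) (X - C (1:k)) = g - 1 := by
  simp

private lemma sq_dvd_iff_inf_ne_bot {k V : Type*} [Field k] [AddCommGroup V] [Module k V]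
    [FiniteDimensional k V] (g : Module.End k V) :
    (X - C 1) ^ 2 ∣ minpoly k g ↔
      LinearMap.ker (g - 1) ⊓ LinearMap.range (g - 1) ≠ ⊥ := by
  have hint : IsIntegral k g := Algebra.IsIntegral.isIntegral g
  have hm0 : minpoly k g ≠ 0 := minpoly.ne_zero hint
  constructor
  · rintro ⟨c, hc⟩
    have hc0 : c ≠ 0 := by
      rintro rfl
      rw [mul_zero] at hc
      exact hm0 hc
    have hne : (aeval g) ((X - C 1) * c) ≠ 0 := by
      intro h
      have hq0 : (X - C 1) * c ≠ 0 := mul_ne_zero (X_sub_C_ne_zero 1) hc0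
      have hle := minpoly.degree_le_of_ne_zero k g hq0 h
      rw [hc, degree_mul, degree_mul, degree_pow, degree_X_sub_C] at hle
      have hdc : c.degree ≠ ⊥ := by rwa [Ne, degree_eq_bot]
      rw [two_smul] at hle
      cases hcd : c.degree with
      | bot => exact hdc hcd
      | coe n =>
        rw [hcd, ← WithBot.coe_one, ← WithBot.coe_add, ← WithBot.coe_add, ← WithBot.coe_add,
          WithBot.coe_le_coe] at hle
        omega
    obtain ⟨v, hv⟩ : ∃ v, (aeval g) ((X - C 1) * c) v ≠ 0 := by
      by_contra h
      push_neg at h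
      exact hne (LinearMap.ext fun v => h v)
    refine (Submodule.ne_bot_iff _).mpr
      ⟨(aeval g) ((X - C 1) * c) v, Submodule.mem_inf.mpr ⟨?_, ?_⟩, hv⟩
    · -- in the kernel
      rw [LinearMap.mem_ker]
      have key : (aeval g) ((X - C 1) * ((X - C 1) * c)) = 0 := by
        rw [show (X - C 1) * ((X - C 1) * c) = (X - C 1) ^ 2 * c by ring, ← hc, minpoly.aeval]
      rw [map_mul, aeval_X_sub_one] at key
      have := congrArg (fun h : Module.End k V => h v) key
      simpa [Module.End.mul_apply] using this
    · -- in the range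
      rw [map_mul, aeval_X_sub_one]
      exact ⟨(aeval g) c v, rfl⟩
  · intro hne
    by_contra hndvd
    apply hne
    rw [eq_bot_iff]
    by_cases h1 : (X - C 1) ∣ minpoly k g
    · obtain ⟨c, hc⟩ := h1
      have hc1 : c.eval 1 ≠ 0 := by
        intro h
        exact hndvd (by rw [hc, sq]; exact mul_dvd_mul_left _ (dvd_iff_isRoot.mpr h))
      intro x hx
      rw [Submodule.mem_inf] at hx
      obtain ⟨hxk, y, hy⟩ := hx
      have hgx : g x = x := by
        have := LinearMap.mem_ker.mp hxk
        rw [LinearMap.sub_apply, Module.End.one_apply, sub_eq_zero] at this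
        exact this
      have e1 : (aeval g) c x = c.eval 1 • x := aeval_fixed g hgx c
      have e2 : (aeval g) c x = 0 := by
        rw [← hy, ← Module.End.mul_apply, ← aeval_X_sub_one g, ← map_mul, mul_comm, ← hc,
          minpoly.aeval, LinearMap.zero_apply]
      rw [e2] at e1
      have hx0 := (smul_eq_zero.mp e1.symm).resolve_left hc1
      rw [Submodule.mem_bot]
      exact hx0
    · have hev : (minpoly k g).eval 1 ≠ 0 := fun h => h1 (dvd_iff_isRoot.mpr h)
      intro x hx
      rw [Submodule.mem_inf] at hx
      obtain ⟨hxk, -⟩ := hx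
      have hgx : g x = x := by
        have := LinearMap.mem_ker.mp hxk
        rw [LinearMap.sub_apply, Module.End.one_apply, sub_eq_zero] at this
        exact this
      have e1 : (aeval g) (minpoly k g) x = (minpoly k g).eval 1 • x :=
        aeval_fixed g hgx (minpoly k g)
      rw [minpoly.aeval, LinearMap.zero_apply] at e1
      have hx0 := (smul_eq_zero.mp e1.symm).resolve_left hev
      rw [Submodule.mem_bot]
      exact hx0
open Polynomial

noncomputable def iotaPQ (p : ℕ) [Fact p.Prime] (M : Type*) [AddCommGroup M]
    [Module ℤ_[p] M] : M →ₗ[ℤ_[p]] TensorProduct ℤ_[p] ℚ_[p] M :=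
  TensorProduct.mk ℤ_[p] ℚ_[p] M 1

instance iotaPQ.isLocalizedModule (p : ℕ) [Fact p.Prime] (M : Type*) [AddCommGroup M]
    [Module ℤ_[p] M] : IsLocalizedModule (nonZeroDivisors ℤ_[p]) (iotaPQ p M) :=
  (isLocalizedModule_iff_isBaseChange (nonZeroDivisors ℤ_[p]) ℚ_[p] _).mpr
    (TensorProduct.isBaseChange ℤ_[p] M ℚ_[p])

-- cancellation of nonzerodivisor smul on the ℚ_p-vector space
private lemma smul_cancel {p : ℕ} [Fact p.Prime] {M : Type*} [AddCommGroup M] [Module ℤ_[p] M]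
    (s : nonZeroDivisors ℤ_[p]) {v : TensorProduct ℤ_[p] ℚ_[p] M}
    (h : (s : ℤ_[p]) • v = 0) : v = 0 := by
  have hs : algebraMap ℤ_[p] ℚ_[p] (s : ℤ_[p]) ≠ 0 := by
    intro h0
    exact nonZeroDivisors.ne_zero s.2 (IsFractionRing.injective ℤ_[p] ℚ_[p] (by simpa using h0))
  rw [← algebraMap_smul ℚ_[p] (s : ℤ_[p]) v] at h
  have h2 : (algebraMap ℤ_[p] ℚ_[p] (s : ℤ_[p]))⁻¹ • ((algebraMap ℤ_[p] ℚ_[p] (s : ℤ_[p])) • v)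
      = (algebraMap ℤ_[p] ℚ_[p] (s : ℤ_[p]))⁻¹ • (0 : TensorProduct ℤ_[p] ℚ_[p] M) := by rw [h]
  rwa [smul_smul, inv_mul_cancel₀ hs, one_smul, smul_zero] at h2

private lemma smul_mem_descend {p : ℕ} [Fact p.Prime] {M : Type*} [AddCommGroup M]
    [Module ℤ_[p] M] (W : Submodule ℚ_[p] (TensorProduct ℤ_[p] ℚ_[p] M))
    (s : nonZeroDivisors ℤ_[p]) {v : TensorProduct ℤ_[p] ℚ_[p] M}
    (h : (s : ℤ_[p]) • v ∈ W) : v ∈ W := by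
  have hs : algebraMap ℤ_[p] ℚ_[p] (s : ℤ_[p]) ≠ 0 := by
    intro h0
    exact nonZeroDivisors.ne_zero s.2 (IsFractionRing.injective ℤ_[p] ℚ_[p] (by simpa using h0))
  rw [← algebraMap_smul ℚ_[p] (s : ℤ_[p]) v] at h
  have := W.smul_mem (algebraMap ℤ_[p] ℚ_[p] (s : ℤ_[p]))⁻¹ h
  rwa [smul_smul, inv_mul_cancel₀ hs, one_smul] at this

private lemma bridgeA {p : ℕ} [Fact p.Prime] {M : Type*} [AddCommGroup M] [Module ℤ_[p] M]
    (u : M →ₗ[ℤ_[p]] M) :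
    Module.IsTorsion ℤ_[p] ↥(LinearMap.ker u ⊓ LinearMap.range u) ↔
      LinearMap.ker (u.baseChange ℚ_[p]) ⊓ LinearMap.range (u.baseChange ℚ_[p]) = ⊥ := by
  set S := nonZeroDivisors ℤ_[p] with hS
  set ι := iotaPQ p M with hι
  set T := u.baseChange ℚ_[p] with hT
  have hcomm : ∀ m : M, T (ι m) = ι (u m) := fun m => by
    simp only [hι, hT, iotaPQ, TensorProduct.mk_apply, LinearMap.baseChange_tmul]
  constructor
  · intro htor
    rw [eq_bot_iff]
    intro v hv
    rw [Submodule.mem_inf] at hv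
    obtain ⟨hvk, w, hw⟩ := hv
    rw [LinearMap.mem_ker] at hvk
    obtain ⟨⟨m, s⟩, hms⟩ := IsLocalizedModule.surj S ι v
    obtain ⟨⟨m', s'⟩, hms'⟩ := IsLocalizedModule.surj S ι w
    rw [Submonoid.smul_def] at hms hms'
    have h1 : ι (u m) = 0 := by
      rw [← hcomm, ← hms, LinearMap.map_smul_of_tower, hvk, smul_zero]
    obtain ⟨t, ht⟩ := (IsLocalizedModule.eq_zero_iff S ι).mp h1
    rw [Submonoid.smul_def] at ht
    have h2 : ι ((s : ℤ_[p]) • u m') = ι ((s' : ℤ_[p]) • m) := by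
      have e1 : ι (u m') = (s' : ℤ_[p]) • v := by
        rw [← hcomm, ← hms', LinearMap.map_smul_of_tower, hw]
      rw [map_smul, map_smul, e1, ← hms, smul_smul, smul_smul, mul_comm]
    have h3 : ι ((s' : ℤ_[p]) • m - (s : ℤ_[p]) • u m') = 0 := by
      rw [map_sub, h2, sub_self]
    obtain ⟨t', ht'⟩ := (IsLocalizedModule.eq_zero_iff S ι).mp h3
    rw [Submonoid.smul_def, smul_sub, sub_eq_zero] at ht'
    set x : M := ((t : ℤ_[p]) * (t' : ℤ_[p]) * (s' : ℤ_[p])) • m with hx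
    have hxk : u x = 0 := by
      rw [hx, map_smul, show ((t : ℤ_[p]) * (t' : ℤ_[p]) * (s' : ℤ_[p]))
        = ((t' : ℤ_[p]) * (s' : ℤ_[p])) * (t : ℤ_[p]) by ring, mul_smul, ht, smul_zero]
    have hxr : x ∈ LinearMap.range u := by
      refine ⟨((t : ℤ_[p]) * (t' : ℤ_[p]) * (s : ℤ_[p])) • m', ?_⟩
      rw [map_smul, show ((t : ℤ_[p]) * (t' : ℤ_[p]) * (s : ℤ_[p]))
        = (t : ℤ_[p]) * ((t' : ℤ_[p]) * (s : ℤ_[p])) by ring, mul_smul, mul_smul, ← ht',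
        hx, ← mul_smul, ← mul_smul]
    obtain ⟨c, hc⟩ := htor (x := ⟨x, Submodule.mem_inf.mpr ⟨LinearMap.mem_ker.mpr hxk, hxr⟩⟩)
    have hc' : (c : ℤ_[p]) • x = 0 := by
      have := congrArg (Subtype.val) hc
      rw [Submonoid.smul_def] at this
      exact this
    have hbig : (((c * t * t' * s' * s : S) : ℤ_[p])) • v = 0 := by
      push_cast
      rw [show ((c:ℤ_[p]) * t * t' * s' * s) • v
        = ((c:ℤ_[p]) * t * t' * s') • ((s:ℤ_[p]) • v) by rw [smul_smul], hms,
        ← map_smul, show ((c:ℤ_[p]) * t * t' * s') • m = (c:ℤ_[p]) • x by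
          rw [hx, smul_smul]; ring_nf, hc', map_zero]
    rw [Submodule.mem_bot]
    exact smul_cancel _ hbig
  · intro hbot z
    obtain ⟨x, hxmem⟩ := z
    rw [Submodule.mem_inf] at hxmem
    obtain ⟨hxk, y, hy⟩ := hxmem
    have h1 : ι x ∈ LinearMap.ker T ⊓ LinearMap.range T := by
      rw [Submodule.mem_inf]
      constructor
      · rw [LinearMap.mem_ker, hcomm, LinearMap.mem_ker.mp hxk, map_zero]
      · exact ⟨ι y, by rw [hcomm, hy]⟩
    rw [hbot, Submodule.mem_bot] at h1
    obtain ⟨t, ht⟩ := (IsLocalizedModule.eq_zero_iff S ι).mp h1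
    refine ⟨t, ?_⟩
    rw [Submonoid.smul_def] at ht ⊢
    exact Subtype.ext (by rw [Submodule.coe_smul]; exact ht)

private lemma bridgeB {p : ℕ} [Fact p.Prime] {M : Type*} [AddCommGroup M] [Module ℤ_[p] M]
    (u : M →ₗ[ℤ_[p]] M) :
    Module.IsTorsion ℤ_[p] (M ⧸ (LinearMap.ker u ⊔ LinearMap.range u)) ↔
      LinearMap.ker (u.baseChange ℚ_[p]) ⊔ LinearMap.range (u.baseChange ℚ_[p]) = ⊤ := by
  set S := nonZeroDivisors ℤ_[p] with hS
  set ι := iotaPQ p M with hι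
  set T := u.baseChange ℚ_[p] with hT
  have hcomm : ∀ m : M, T (ι m) = ι (u m) := fun m => by
    simp only [hι, hT, iotaPQ, TensorProduct.mk_apply, LinearMap.baseChange_tmul]
  constructor
  · intro htor
    rw [eq_top_iff]
    intro v _
    obtain ⟨⟨m, s⟩, hms⟩ := IsLocalizedModule.surj S ι v
    rw [Submonoid.smul_def] at hms
    obtain ⟨c, hc⟩ := htor (x := Submodule.Quotient.mk
      (p := LinearMap.ker u ⊔ LinearMap.range u) m)
    rw [Submonoid.smul_def, ← Submodule.Quotient.mk_smul, Submodule.Quotient.mk_eq_zero] at hc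
    rw [Submodule.mem_sup] at hc
    obtain ⟨k, hk, r, hr, hkr⟩ := hc
    obtain ⟨y, hy⟩ := hr
    have h1 : ι ((c : ℤ_[p]) • m) ∈ LinearMap.ker T ⊔ LinearMap.range T := by
      rw [← hkr, map_add]
      refine Submodule.add_mem_sup ?_ ?_
      · rw [LinearMap.mem_ker, hcomm, LinearMap.mem_ker.mp hk, map_zero]
      · exact ⟨ι y, by rw [hcomm, hy]⟩
    have h2 : (((c * s : S) : ℤ_[p])) • v ∈ LinearMap.ker T ⊔ LinearMap.range T := by
      push_cast
      rw [mul_smul, hms, ← map_smul]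
      exact h1
    exact smul_mem_descend _ (c * s) h2
  · intro htop z
    obtain ⟨m, rfl⟩ := Submodule.Quotient.mk_surjective _ z
    have hmem : ι m ∈ LinearMap.ker T ⊔ LinearMap.range T := by
      rw [htop]; trivial
    rw [Submodule.mem_sup] at hmem
    obtain ⟨a, ha, b, hb, hab⟩ := hmem
    obtain ⟨w, hw⟩ := hb
    obtain ⟨⟨m₁, s₁⟩, hms₁⟩ := IsLocalizedModule.surj S ι a
    obtain ⟨⟨m₂, s₂⟩, hms₂⟩ := IsLocalizedModule.surj S ι w
    rw [Submonoid.smul_def] at hms₁ hms₂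
    dsimp only at hms₁ hms₂
    have h1 : ι (u m₁) = 0 := by
      rw [← hcomm, ← hms₁, LinearMap.map_smul_of_tower, LinearMap.mem_ker.mp ha, smul_zero]
    obtain ⟨t₁, ht₁⟩ := (IsLocalizedModule.eq_zero_iff S ι).mp h1
    rw [Submonoid.smul_def] at ht₁
    set n₁ : M := ((t₁ : ℤ_[p]) * (s₂ : ℤ_[p])) • m₁ + ((t₁ : ℤ_[p]) * (s₁ : ℤ_[p])) • u m₂
      with hn₁
    have h2 : ι (((t₁ : ℤ_[p]) * (s₁ : ℤ_[p]) * (s₂ : ℤ_[p])) • m) = ι n₁ := by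
      have e2 : ι (u m₂) = (s₂ : ℤ_[p]) • b := by
        rw [← hcomm, ← hms₂, LinearMap.map_smul_of_tower, hw]
      rw [hn₁, map_add, map_smul, map_smul, map_smul, e2, ← hms₁, ← hab, smul_add]
      rw [smul_smul, smul_smul,
        show (t₁ : ℤ_[p]) * (s₂ : ℤ_[p]) * (s₁ : ℤ_[p])
          = (t₁ : ℤ_[p]) * (s₁ : ℤ_[p]) * (s₂ : ℤ_[p]) by ring]
    have h3 : ι (((t₁ : ℤ_[p]) * (s₁ : ℤ_[p]) * (s₂ : ℤ_[p])) • m - n₁) = 0 := by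
      rw [map_sub, h2, sub_self]
    obtain ⟨t₂, ht₂⟩ := (IsLocalizedModule.eq_zero_iff S ι).mp h3
    rw [Submonoid.smul_def, smul_sub, sub_eq_zero] at ht₂
    refine ⟨t₂ * t₁ * s₁ * s₂, ?_⟩
    rw [Submonoid.smul_def, ← Submodule.Quotient.mk_smul, Submodule.Quotient.mk_eq_zero]
    have : ((t₂ * t₁ * s₁ * s₂ : S) : ℤ_[p]) • m = (t₂ : ℤ_[p]) • n₁ := by
      push_cast
      rw [← ht₂, smul_smul]
      ring_nf
    rw [this, hn₁, smul_add]
    refine Submodule.add_mem _ ?_ ?_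
    · apply Submodule.mem_sup_left
      rw [smul_smul, LinearMap.mem_ker, map_smul,
        show (t₂ : ℤ_[p]) * ((t₁ : ℤ_[p]) * (s₂ : ℤ_[p])) =
          ((t₂ : ℤ_[p]) * (s₂ : ℤ_[p])) * (t₁ : ℤ_[p]) by ring, mul_smul, ht₁, smul_zero]
    · apply Submodule.mem_sup_right
      rw [smul_smul, ← map_smul]
      exact ⟨_, rfl⟩

private lemma inf_eq_bot_iff_sup_eq_top {k V : Type*} [Field k] [AddCommGroup V] [Module k V]
    [FiniteDimensional k V] (T : V →ₗ[k] V) :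
    (LinearMap.ker T ⊓ LinearMap.range T = ⊥ ↔ LinearMap.ker T ⊔ LinearMap.range T = ⊤) := by
  have hrank := LinearMap.finrank_range_add_finrank_ker T
  have hsum := Submodule.finrank_sup_add_finrank_inf_eq (LinearMap.ker T) (LinearMap.range T)
  constructor
  · intro h
    rw [h, finrank_bot, add_zero] at hsum
    apply Submodule.eq_top_of_finrank_eq
    omega
  · intro h
    rw [h, finrank_top] at hsum
    rw [← Submodule.finrank_eq_zero (S := LinearMap.ker T ⊓ LinearMap.range T)]
    omega

private lemma main_aux (p : ℕ) [Fact p.Prime] (M : Type*) [AddCommGroup M] [Module ℤ_[p] M]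
    [Module.Finite ℤ_[p] M] (u : M →ₗ[ℤ_[p]] M) :
    (Finite (LinearMap.ker ((LinearMap.range u).mkQ.comp (LinearMap.ker u).subtype)) ∧
        Finite ((M ⧸ LinearMap.range u) ⧸
          LinearMap.range ((LinearMap.range u).mkQ.comp (LinearMap.ker u).subtype))) ↔
      LinearMap.ker (u.baseChange ℚ_[p]) ⊓ LinearMap.range (u.baseChange ℚ_[p]) = ⊥ := by
  set K := LinearMap.ker u with hK
  set Rg := LinearMap.range u with hRg
  set T := u.baseChange ℚ_[p] with hT
  set f := Rg.mkQ.comp K.subtype with hf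
  haveI : Module.Finite ℚ_[p] (TensorProduct ℤ_[p] ℚ_[p] M) :=
    Module.Finite.base_change ℤ_[p] ℚ_[p] M
  haveI : IsNoetherian ℤ_[p] M := isNoetherian_of_isNoetherianRing_of_finite ℤ_[p] M
  -- kernel of f ≃ K ⊓ Rg
  have hker_equiv : Finite (LinearMap.ker f) ↔ Finite ↥(K ⊓ Rg) := by
    have e : LinearMap.ker f ≃ ↥(K ⊓ Rg) := by
      refine ⟨fun x => ⟨((x : ↥K) : M), Submodule.mem_inf.mpr ⟨(x : ↥K).2, ?_⟩⟩,
        fun y => ⟨⟨(y : M), (Submodule.mem_inf.mp y.2).1⟩, ?_⟩, fun x => rfl, fun y => rfl⟩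
      · have hx : Rg.mkQ (K.subtype (x : ↥K)) = 0 := x.2
        rwa [Submodule.mkQ_apply, Submodule.Quotient.mk_eq_zero] at hx
      · show Rg.mkQ (K.subtype ⟨(y : M), (Submodule.mem_inf.mp y.2).1⟩) = 0
        rw [Submodule.mkQ_apply, Submodule.Quotient.mk_eq_zero]
        exact (Submodule.mem_inf.mp y.2).2
    exact ⟨fun _ => Finite.of_equiv _ e, fun _ => Finite.of_equiv _ e.symm⟩
  -- cokernel of f ≃ M ⧸ (K ⊔ Rg)
  have hrange_f : LinearMap.range f = Submodule.map Rg.mkQ K := by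
    rw [hf, LinearMap.range_comp, Submodule.range_subtype]
  have hmap_bot : Submodule.map Rg.mkQ Rg = ⊥ := by
    rw [eq_bot_iff]
    rintro x ⟨y, hy, rfl⟩
    rw [Submodule.mem_bot, Submodule.mkQ_apply, Submodule.Quotient.mk_eq_zero]
    exact hy
  have hmap_sup : Submodule.map Rg.mkQ (K ⊔ Rg) = LinearMap.range f := by
    rw [Submodule.map_sup, hmap_bot, sup_bot_eq, hrange_f]
  have hcoker_equiv :
      Finite ((M ⧸ Rg) ⧸ LinearMap.range f) ↔ Finite (M ⧸ (K ⊔ Rg)) := by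
    have e1 : ((M ⧸ Rg) ⧸ LinearMap.range f) ≃ₗ[ℤ_[p]]
        ((M ⧸ Rg) ⧸ Submodule.map Rg.mkQ (K ⊔ Rg)) :=
      Submodule.quotEquivOfEq _ _ hmap_sup.symm
    have e2 := Submodule.quotientQuotientEquivQuotient Rg (K ⊔ Rg) le_sup_right
    exact ⟨fun _ => Finite.of_equiv _ (e1.trans e2).toEquiv,
      fun _ => Finite.of_equiv _ (e1.trans e2).symm.toEquiv⟩
  haveI hfinKR : Module.Finite ℤ_[p] ↥(K ⊓ Rg) :=
    Module.Finite.iff_fg.mpr (IsNoetherian.noetherian _)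
  haveI hfinQ : Module.Finite ℤ_[p] (M ⧸ (K ⊔ Rg)) :=
    Module.Finite.of_surjective (K ⊔ Rg).mkQ (Submodule.mkQ_surjective _)
  rw [hker_equiv, hcoker_equiv, finite_iff_torsion (p := p) (N := ↥(K ⊓ Rg)),
    finite_iff_torsion (p := p) (N := M ⧸ (K ⊔ Rg)), bridgeA u, bridgeB u, ← hT]
  constructor
  · rintro ⟨h1, _⟩
    exact h1
  · intro h1
    exact ⟨h1, (inf_eq_bot_iff_sup_eq_top T).mp h1⟩

/-- The map `f : M^Γ → M_Γ` induced by the identity has finite kernel and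
finite cokernel iff `1` is not a multiple root of the minimal polynomial of
`γ` on `M ⊗ ℚ_p`. -/
theorem stmt_8 (p : ℕ) [Fact p.Prime]
    (M : Type*) [AddCommGroup M] [Module ℤ_[p] M] [Module.Finite ℤ_[p] M]
    (γ : M →ₗ[ℤ_[p]] M)
    (f : LinearMap.ker ((1 : Module.End ℤ_[p] M) - γ) →ₗ[ℤ_[p]]
          M ⧸ LinearMap.range ((1 : Module.End ℤ_[p] M) - γ))
    (hf : f = (LinearMap.range ((1 : Module.End ℤ_[p] M) - γ)).mkQ.comp
          (LinearMap.ker ((1 : Module.End ℤ_[p] M) - γ)).subtype) :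
    (Finite (LinearMap.ker f) ∧
        Finite ((M ⧸ LinearMap.range ((1 : Module.End ℤ_[p] M) - γ)) ⧸
          LinearMap.range f)) ↔
      ¬ ((X - 1) ^ 2 ∣ minpoly ℚ_[p]
        (LinearMap.baseChange ℚ_[p] γ :
          Module.End ℚ_[p] (TensorProduct ℤ_[p] ℚ_[p] M))) := by
  subst hf
  haveI : Module.Finite ℚ_[p] (TensorProduct ℤ_[p] ℚ_[p] M) :=
    Module.Finite.base_change ℤ_[p] ℚ_[p] M
  rw [main_aux p M ((1 : Module.End ℤ_[p] M) - γ)]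
  rw [show ((X : ℚ_[p][X]) - 1) = X - C 1 from (by rw [C_1]),
    sq_dvd_iff_inf_ne_bot (LinearMap.baseChange ℚ_[p] γ), not_not]
  have hT1 : LinearMap.baseChange ℚ_[p] ((1 : Module.End ℤ_[p] M) - γ)
      = 1 - LinearMap.baseChange ℚ_[p] γ := by
    rw [LinearMap.baseChange_sub, LinearMap.baseChange_one]
  have hkerT : LinearMap.ker (LinearMap.baseChange ℚ_[p] ((1 : Module.End ℤ_[p] M) - γ))
      = LinearMap.ker (LinearMap.baseChange ℚ_[p] γ - 1) := by
    ext v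
    simp only [LinearMap.mem_ker, hT1, LinearMap.sub_apply, Module.End.one_apply]
    rw [sub_eq_zero, sub_eq_zero, eq_comm]
  have hrangeT : LinearMap.range (LinearMap.baseChange ℚ_[p] ((1 : Module.End ℤ_[p] M) - γ))
      = LinearMap.range (LinearMap.baseChange ℚ_[p] γ - 1) := by
    ext v
    constructor
    · rintro ⟨w, rfl⟩
      refine ⟨-w, ?_⟩
      simp only [hT1, LinearMap.sub_apply, Module.End.one_apply, map_neg]
      abel
    · rintro ⟨w, rfl⟩
      refine ⟨-w, ?_⟩
      simp only [hT1, LinearMap.sub_apply, Module.End.one_apply, map_neg]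
      abel
  rw [hkerT, hrangeT]
end
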